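/- arXiv:1411.0782 — 2 statements merged into one kernel-verified Lean document; each statement's English description precedes it below -/
import Mathlib

section
/- Let C and C' be tidy and regular CRNs sharing no intermediate species, with formal bases F and F' respectively. Then the formal basis of C ∪ C' equals F ∪ F'. -/
namespace CRNVerif

variable {σ : Type} [DecidableEq σ]

/-- A state is a multiset of species. -/
abbrev State (σ : Type) := Multiset σ
/-- A reaction is a pair (reactants, products) of multisets of species. -/
abbrev Reaction (σ : Type) := Multiset σ × Multiset σ
/-- A pathway is a finite sequence of reactions. -/
abbrev Pathway (σ : Type) := List (Reaction σ)

/-- Result of applying reaction `r` in state `S` (i.e. `S ⊕ r`). -/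
def applyRxn (S : State σ) (r : Reaction σ) : State σ := S - r.1 + r.2

/-- Minimal initial state of a pathway: the smallest state in which
its reactions can occur in succession. -/
def minInit : Pathway σ → State σ
  | [] => 0
  | r :: p => r.1 + (minInit p - r.2)

/-- State reached from `S` after performing all reactions of `p` in order. -/
def finalFrom (S : State σ) : Pathway σ → State σ
  | [] => S
  | r :: p => finalFrom (applyRxn S r) p

/-- The final state of a pathway (starting from its minimal initial state). -/
def finalState (p : Pathway σ) : State σ := finalFrom (minInit p) p

/-- The state `S_i` after the first `i` reactions, starting from the minimal initial state. -/
def stateAt (p : Pathway σ) (i : ℕ) : State σ := finalFrom (minInit p) (p.take i)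

/-- A state is formal if it contains only formal species (as given by `fm`). -/
def FormalState (fm : σ → Bool) (S : State σ) : Prop := ∀ x ∈ S, fm x = true

/-- `Formal(S)`: the multiset obtained by removing all intermediate species from `S`. -/
def formalPart (fm : σ → Bool) (S : State σ) : State σ := S.filter (fun x => fm x = true)

/-- A reaction is trivial if reactants equal products. -/
def TrivialRxn (r : Reaction σ) : Prop := r.1 = r.2

/-- A CRN is a (finite) set of nontrivial reactions. -/
def NontrivialRxns (C : Finset (Reaction σ)) : Prop := ∀ r ∈ C, ¬ TrivialRxn r

/-- A formal CRN contains only formal reactions. -/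
def IsFormalCRN (fm : σ → Bool) (C : Finset (Reaction σ)) : Prop :=
  ∀ r ∈ C, FormalState fm r.1 ∧ FormalState fm r.2

/-- `p` is a pathway of the CRN `C`. -/
def PathwayOf (C : Finset (Reaction σ)) (p : Pathway σ) : Prop := ∀ r ∈ p, r ∈ C

/-- `Interleave l₁ l₂ l`: `l` can be partitioned into the two (order-preserving,
not necessarily contiguous) subsequences `l₁` and `l₂`. -/
inductive Interleave {α : Type u} : List α → List α → List α → Prop
  | nil : Interleave [] [] []
  | left {a : α} {l₁ l₂ l : List α} : Interleave l₁ l₂ l → Interleave (a :: l₁) l₂ (a :: l)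
  | right {a : α} {l₁ l₂ l : List α} : Interleave l₁ l₂ l → Interleave l₁ (a :: l₂) (a :: l)

/-- `InterleaveMany qs p`: `p` is generated by interleaving the lists in `qs`. -/
inductive InterleaveMany {α : Type u} : List (List α) → List α → Prop
  | nil : InterleaveMany [] []
  | cons {q r p : List α} {qs : List (List α)} :
      Interleave q r p → InterleaveMany qs r → InterleaveMany (q :: qs) p

/-- A pathway is semiformal if its minimal initial state is formal. -/
def Semiformal (fm : σ → Bool) (p : Pathway σ) : Prop := FormalState fm (minInit p)

/-- A formal pathway: a (nonempty) pathway whose minimal initial state and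
final state are both formal. -/
def FormalPathway (fm : σ → Bool) (p : Pathway σ) : Prop :=
  p ≠ [] ∧ FormalState fm (minInit p) ∧ FormalState fm (finalState p)

/-- A formal pathway is decomposable if it can be partitioned into two nonempty
subsequences that are each formal pathways. -/
def FDecomposable (fm : σ → Bool) (p : Pathway σ) : Prop :=
  ∃ q₁ q₂, q₁ ≠ [] ∧ q₂ ≠ [] ∧ Interleave q₁ q₂ p ∧
    FormalPathway fm q₁ ∧ FormalPathway fm q₂

/-- A prime formal pathway is a formal pathway that is not decomposable. -/
def PrimePathway (fm : σ → Bool) (p : Pathway σ) : Prop :=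
  FormalPathway fm p ∧ ¬ FDecomposable fm p

/-- The formal basis: the set of (initial state, final state) pairs of prime
formal pathways of `C`. -/
def formalBasis (fm : σ → Bool) (C : Finset (Reaction σ)) : Set (Reaction σ) :=
  { r | ∃ p, PathwayOf C p ∧ PrimePathway fm p ∧ r = (minInit p, finalState p) }

/-- Two sets of reactions are equal up to addition/removal of trivial reactions. -/
def EqUpToTrivial (A B : Set (Reaction σ)) : Prop :=
  {r ∈ A | ¬ TrivialRxn r} = {r ∈ B | ¬ TrivialRxn r}

/-- The reaction at (0-based) index `j` of `p` is a turning point: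
before it only formal species of the initial state appear, from it on only formal
species of the final state appear, and at the moment the turning point fires,
no formal species are left over. -/
def TurningAt (fm : σ → Bool) (p : Pathway σ) (j : ℕ) : Prop :=
  ∃ h : j < p.length,
    (∀ i ≤ j, formalPart fm (stateAt p i) ≤ minInit p) ∧
    (∀ i, j < i → i ≤ p.length → formalPart fm (stateAt p i) ≤ finalState p) ∧
    formalPart fm (stateAt p j - (p.get ⟨j, h⟩).1) = 0

/-- A regular formal pathway: one that implements a formal reaction,
i.e. has a turning point. -/
def RegularPathway (fm : σ → Bool) (p : Pathway σ) : Prop :=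
  FormalPathway fm p ∧ ∃ j, TurningAt fm p j

/-- A CRN is regular if every prime formal pathway is regular. -/
def RegularCRN (fm : σ → Bool) (C : Finset (Reaction σ)) : Prop :=
  ∀ p, PathwayOf C p → PrimePathway fm p → RegularPathway fm p

/-- `q` is a strong closing pathway for `p` (within CRN `C`): it can occur in the
final state of `p`, consumes no formal species, and leads back to a formal state. -/
def ClosingPathway (fm : σ → Bool) (C : Finset (Reaction σ)) (p q : Pathway σ) : Prop :=
  PathwayOf C q ∧ minInit q ≤ finalState p ∧ (∀ r ∈ q, formalPart fm r.1 = 0) ∧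
  FormalState fm (finalFrom (finalState p) q)

/-- A CRN is strongly tidy if every semiformal pathway has a strong closing pathway. -/
def StronglyTidy (fm : σ → Bool) (C : Finset (Reaction σ)) : Prop :=
  ∀ p, PathwayOf C p → Semiformal fm p → ∃ q, ClosingPathway fm C p q

/-- A semiformal pathway is decomposable if it can be partitioned into two
nonempty subsequences that are each semiformal. -/
def SDecomposable (fm : σ → Bool) (p : Pathway σ) : Prop :=
  ∃ q₁ q₂, q₁ ≠ [] ∧ q₂ ≠ [] ∧ Interleave q₁ q₂ p ∧ Semiformal fm q₁ ∧ Semiformal fm q₂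

/-- The width of a pathway: the maximum size of the states it passes through. -/
def width (p : Pathway σ) : ℕ :=
  ((List.range (p.length + 1)).map (fun i => Multiset.card (stateAt p i))).foldr max 0

/-- The branching factor of a CRN. -/
def branching (C : Finset (Reaction σ)) : ℕ :=
  C.sup (fun r => max (Multiset.card r.1) (Multiset.card r.2))

/-- Formal state `T` is reachable from `S` via reactions of `C`. -/
def Reachable (C : Finset (Reaction σ)) (S T : State σ) : Prop :=
  ∃ p, PathwayOf C p ∧ minInit p ≤ S ∧ finalFrom S p = T

/-- `C` and `C'` share no intermediate species: any species occurring in both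
CRNs is formal. -/
def NoSharedIntermediates (fm : σ → Bool) (C C' : Finset (Reaction σ)) : Prop :=
  ∀ r ∈ C, ∀ r' ∈ C', ∀ x : σ, x ∈ r.1 + r.2 → x ∈ r'.1 + r'.2 → fm x = true

/-- The formal closure of a pathway: the minimal state containing the formal part
of every state along the pathway. -/
def formalClosure (fm : σ → Bool) (p : Pathway σ) : State σ :=
  ((List.range (p.length + 1)).map (fun i => formalPart fm (stateAt p i))).foldr (· ∪ ·) 0

/-- The decomposed final states of a semiformal pathway: all pairs of final
states arising from decompositions into two (nonempty) semiformal pathways. -/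
def DFS (fm : σ → Bool) (p : Pathway σ) : Set (State σ × State σ) :=
  { T | ∃ q₁ q₂, q₁ ≠ [] ∧ q₂ ≠ [] ∧ Interleave q₁ q₂ p ∧
        Semiformal fm q₁ ∧ Semiformal fm q₂ ∧ T = (finalState q₁, finalState q₂) }

/-- The minimal state containing the formal parts of all states strictly after index `j`. -/
def rfsAt (fm : σ → Bool) (p : Pathway σ) (j : ℕ) : State σ :=
  (((List.range (p.length + 1)).filter (fun i => j < i)).map
      (fun i => formalPart fm (stateAt p i))).foldr (· ∪ ·) 0

/-- The regular final states of a pathway: the minimal states `T` witnessed by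
potential turning point reactions. -/
def RFS (fm : σ → Bool) (p : Pathway σ) : Set (State σ) :=
  { T | ∃ j, ∃ h : j < p.length,
      (∀ i ≤ j, formalPart fm (stateAt p i) ≤ minInit p) ∧
      formalPart fm (stateAt p j - (p.get ⟨j, h⟩).1) = 0 ∧
      T = rfsAt fm p j }

/-- The signature of a semiformal pathway: (initial state, final state, width,
formal closure, DFS, RFS). -/
def signature (fm : σ → Bool) (p : Pathway σ) :
    State σ × State σ × ℕ × State σ × Set (State σ × State σ) × Set (State σ) :=
  (minInit p, finalState p, width p, formalClosure fm p, DFS fm p, RFS fm p)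

/-- An annotated prime pathway: exactly its chosen turning point is annotated,
with the corresponding formal basis reaction. -/
def GoodAnnotation (fm : σ → Bool) (ap : List (Reaction σ × Option (Reaction σ))) : Prop :=
  PrimePathway fm (ap.map Prod.fst) ∧
  ∃ j, TurningAt fm (ap.map Prod.fst) j ∧
    ap.map Prod.snd = (List.range ap.length).map
      (fun i => if i = j then
          some (minInit (ap.map Prod.fst), finalState (ap.map Prod.fst)) else none)

/-- `p` can be interpreted as `q`: `q` can occur in the initial state of `p`, has
the same net effect, and there is a decomposition of `p` into prime formal pathways
such that replacing a chosen turning point of each by the corresponding formal basis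
element and removing all other reactions yields `q`. -/
def Interpreted (fm : σ → Bool) (p q : Pathway σ) : Prop :=
  minInit q ≤ minInit p ∧
  finalFrom (minInit p) q = finalState p ∧
  ∃ ap : List (Reaction σ × Option (Reaction σ)),
    ap.map Prod.fst = p ∧ (ap.map Prod.snd).reduceOption = q ∧
    ∃ aps, InterleaveMany aps ap ∧ ∀ a ∈ aps, GoodAnnotation fm a


section Aux

variable {α : Type u}

lemma interleave_symm {l₁ l₂ l : List α} (h : Interleave l₁ l₂ l) :
    Interleave l₂ l₁ l := by
  induction h with
  | nil => exact .nil
  | left h ih => exact .right ih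
  | right h ih => exact .left ih

lemma interleave_filter (P : α → Bool) (l : List α) :
    Interleave (l.filter P) (l.filter fun a => !P a) l := by
  induction l with
  | nil => simpa using Interleave.nil
  | cons a l ih =>
    by_cases h : P a
    · simpa [List.filter, h] using Interleave.left ih
    · simp at h
      simpa [List.filter, h] using Interleave.right ih

/-- Species not occurring in any reaction of `q`. -/
def ZeroAt (x : σ) (q : Pathway σ) : Prop := ∀ r ∈ q, x ∉ r.1 ∧ x ∉ r.2

lemma count_minInit_cons (x : σ) (r : Reaction σ) (p : Pathway σ) :
    Multiset.count x (minInit (r :: p)) =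
      Multiset.count x r.1 + (Multiset.count x (minInit p) - Multiset.count x r.2) := by
  simp [minInit]

lemma minInit_count_eq (x : σ) {q₁ q₂ p : Pathway σ}
    (h : Interleave q₁ q₂ p) (hz : ZeroAt x q₂) :
    Multiset.count x (minInit q₁) = Multiset.count x (minInit p) := by
  induction h with
  | nil => rfl
  | @left a l₁ l₂ l h ih =>
    rw [count_minInit_cons, count_minInit_cons, ih hz]
  | @right a l₁ l₂ l h ih =>
    have ha := hz a (List.mem_cons_self)
    have hz' : ZeroAt x l₂ := fun r hr => hz r (List.mem_cons_of_mem _ hr)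
    rw [count_minInit_cons,
      Multiset.count_eq_zero_of_notMem ha.1, Multiset.count_eq_zero_of_notMem ha.2,
      ih hz']
    omega

lemma count_applyRxn (x : σ) (S : State σ) (r : Reaction σ) :
    Multiset.count x (applyRxn S r) =
      Multiset.count x S - Multiset.count x r.1 + Multiset.count x r.2 := by
  simp [applyRxn]

lemma finalFrom_count_eq (x : σ) {q₁ q₂ p : Pathway σ}
    (h : Interleave q₁ q₂ p) (hz : ZeroAt x q₂) :
    ∀ S T : State σ, Multiset.count x S = Multiset.count x T →
      Multiset.count x (finalFrom S q₁) = Multiset.count x (finalFrom T p) := by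
  induction h with
  | nil => intro S T hST; simpa [finalFrom] using hST
  | @left a l₁ l₂ l h ih =>
    intro S T hST
    simp only [finalFrom]
    exact ih hz _ _ (by rw [count_applyRxn, count_applyRxn, hST])
  | @right a l₁ l₂ l h ih =>
    intro S T hST
    have ha := hz a (List.mem_cons_self)
    have hz' : ZeroAt x l₂ := fun r hr => hz r (List.mem_cons_of_mem _ hr)
    simp only [finalFrom]
    refine ih hz' _ _ ?_
    rw [count_applyRxn, Multiset.count_eq_zero_of_notMem ha.1,
      Multiset.count_eq_zero_of_notMem ha.2, hST]
    omega

lemma mem_minInit {x : σ} {p : Pathway σ} (hx : x ∈ minInit p) :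
    ∃ r ∈ p, x ∈ r.1 := by
  induction p with
  | nil => simp [minInit] at hx
  | cons r p ih =>
    rcases Multiset.mem_add.mp hx with h | h
    · exact ⟨r, List.mem_cons_self, h⟩
    · obtain ⟨r', hr', hx'⟩ := ih (Multiset.mem_of_le (tsub_le_self) h)
      exact ⟨r', List.mem_cons_of_mem _ hr', hx'⟩

lemma mem_finalFrom {x : σ} {S : State σ} {p : Pathway σ}
    (hx : x ∈ finalFrom S p) : x ∈ S ∨ ∃ r ∈ p, x ∈ r.2 := by
  induction p generalizing S with
  | nil => exact Or.inl hx
  | cons r p ih =>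
    rcases ih hx with h | ⟨r', hr', hx'⟩
    · rcases Multiset.mem_add.mp h with h | h
      · exact Or.inl (Multiset.mem_of_le (tsub_le_self) h)
      · exact Or.inr ⟨r, List.mem_cons_self, h⟩
    · exact Or.inr ⟨r', List.mem_cons_of_mem _ hr', hx'⟩

/-- Every species in the minimal initial state or final state of a pathway
occurs in some reaction of the pathway. -/
lemma mem_of_mem_minInit_or_final {x : σ} {p : Pathway σ}
    (hx : x ∈ minInit p ∨ x ∈ finalState p) : ∃ r ∈ p, x ∈ r.1 + r.2 := by
  rcases hx with hx | hx
  · obtain ⟨r, hr, h⟩ := mem_minInit hx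
    exact ⟨r, hr, Multiset.mem_add.mpr (Or.inl h)⟩
  · rcases mem_finalFrom hx with h | ⟨r, hr, h⟩
    · obtain ⟨r, hr, h⟩ := mem_minInit h
      exact ⟨r, hr, Multiset.mem_add.mpr (Or.inl h)⟩
    · exact ⟨r, hr, Multiset.mem_add.mpr (Or.inr h)⟩

/-- Half of a split of a formal pathway of `C ∪ C'` is a formal pathway,
provided the other half consists of reactions of the other CRN. -/
lemma formal_half {fm : σ → Bool} {C C' : Finset (Reaction σ)}
    (hdisj : NoSharedIntermediates fm C C')
    {p q₁ q₂ : Pathway σ} (hI : Interleave q₁ q₂ p)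
    (hq₁C : PathwayOf C q₁) (hq₂C' : PathwayOf C' q₂)
    (hq₁ne : q₁ ≠ []) (hp : FormalPathway fm p) :
    FormalPathway fm q₁ := by
  have key : ∀ x : σ, fm x ≠ true →
      (x ∈ minInit q₁ ∨ x ∈ finalState q₁) → False := by
    intro x hfm hx
    obtain ⟨r, hr, hxr⟩ := mem_of_mem_minInit_or_final hx
    have hz : ZeroAt x q₂ := by
      intro r' hr'
      constructor <;> intro hmem
      · exact hfm (hdisj r (hq₁C r hr) r' (hq₂C' r' hr') x hxr
          (Multiset.mem_add.mpr (Or.inl hmem)))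
      · exact hfm (hdisj r (hq₁C r hr) r' (hq₂C' r' hr') x hxr
          (Multiset.mem_add.mpr (Or.inr hmem)))
    have hmin : Multiset.count x (minInit q₁) = Multiset.count x (minInit p) :=
      minInit_count_eq x hI hz
    have hminp : Multiset.count x (minInit p) = 0 :=
      Multiset.count_eq_zero_of_notMem (fun hmem => hfm (hp.2.1 x hmem))
    rcases hx with hx | hx
    · have hpos := Multiset.count_pos.mpr hx
      have h0 := hmin.trans hminp
      omega
    · have hfin : Multiset.count x (finalState q₁) = Multiset.count x (finalState p) :=
        finalFrom_count_eq x hI hz _ _ (hmin)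
      have hfinp : Multiset.count x (finalState p) = 0 :=
        Multiset.count_eq_zero_of_notMem (fun hmem => hfm (hp.2.2 x hmem))
      have hpos := Multiset.count_pos.mpr hx
      have h0 := hfin.trans hfinp
      omega
  refine ⟨hq₁ne, ?_, ?_⟩
  · intro x hx
    by_contra hfm
    exact key x hfm (Or.inl hx)
  · intro x hx
    by_contra hfm
    exact key x hfm (Or.inr hx)

/-- Key lemma: a prime formal pathway of `C ∪ C'` lies entirely in `C` or in `C'`. -/
lemma prime_split {fm : σ → Bool} {C C' : Finset (Reaction σ)}
    (hdisj : NoSharedIntermediates fm C C')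
    {p : Pathway σ} (hp : PathwayOf (C ∪ C') p) (hprime : PrimePathway fm p) :
    PathwayOf C p ∨ PathwayOf C' p := by
  classical
  set q₁ := p.filter (fun r => decide (r ∈ C)) with hq₁def
  set q₂ := p.filter (fun r => !decide (r ∈ C)) with hq₂def
  have hI : Interleave q₁ q₂ p := interleave_filter _ p
  have hq₁C : PathwayOf C q₁ := by
    intro r hr
    have := List.of_mem_filter hr
    simpa using this
  have hq₂C' : PathwayOf C' q₂ := by
    intro r hr
    have h1 : r ∈ p := List.mem_of_mem_filter hr
    have h2 := List.of_mem_filter hr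
    simp only [Bool.not_eq_true', decide_eq_false_iff_not] at h2
    rcases Finset.mem_union.mp (hp r h1) with h | h
    · exact absurd h h2
    · exact h
  by_cases h2 : q₂ = []
  · left
    intro r hr
    by_contra hrC
    have : r ∈ q₂ := List.mem_filter.mpr ⟨hr, by simp [hrC]⟩
    simp [h2] at this
  · by_cases h1 : q₁ = []
    · right
      intro r hr
      by_contra hrC'
      rcases Finset.mem_union.mp (hp r hr) with h | h
      · have : r ∈ q₁ := List.mem_filter.mpr ⟨hr, by simp [h]⟩
        simp [h1] at this
      · exact hrC' h
    · exfalso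
      apply hprime.2
      refine ⟨q₁, q₂, h1, h2, hI, ?_, ?_⟩
      · exact formal_half hdisj hI hq₁C hq₂C' h1 hprime.1
      · have hdisj' : NoSharedIntermediates fm C' C := by
          intro r hr r' hr' x hx hx'
          exact hdisj r' hr' r hr x hx' hx
        exact formal_half hdisj' (interleave_symm hI) hq₂C' hq₁C h2 hprime.1

end Aux

/-- For tidy and regular CRNs sharing no intermediate species, the formal basis of
the union is the union of the formal bases. -/
theorem formalBasis_union {σ : Type} [DecidableEq σ] (fm : σ → Bool)
    (C C' : Finset (Reaction σ))
    (hC : NontrivialRxns C) (hC' : NontrivialRxns C')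
    (hdisj : NoSharedIntermediates fm C C')
    (ht : StronglyTidy fm C) (hr : RegularCRN fm C)
    (ht' : StronglyTidy fm C') (hr' : RegularCRN fm C') :
    formalBasis fm (C ∪ C') = formalBasis fm C ∪ formalBasis fm C' := by
  ext r
  constructor
  · rintro ⟨p, hp, hprime, rfl⟩
    rcases prime_split hdisj hp hprime with h | h
    · exact Or.inl ⟨p, h, hprime, rfl⟩
    · exact Or.inr ⟨p, h, hprime, rfl⟩
  · rintro (⟨p, hp, hprime, rfl⟩ | ⟨p, hp, hprime, rfl⟩)
    · exact ⟨p, fun r hr => Finset.mem_union.mpr (Or.inl (hp r hr)), hprime, rfl⟩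
    · exact ⟨p, fun r hr => Finset.mem_union.mpr (Or.inr (hp r hr)), hprime, rfl⟩

end CRNVerif
end

section
/- If p is an undecomposable semiformal pathway of width w > 0 in a CRN with branching factor b, then there exists an undecomposable semiformal pathway of width strictly less than w but at least (w - b)/b. -/
namespace CRNVerif

variable {σ : Type} [DecidableEq σ]

section AuxLemmas

/-! ### Auxiliary multiset lemmas -/

lemma tsub_add_le_left (a b c : Multiset σ) : a + b - c ≤ (a - c) + b := by
  rw [Multiset.le_iff_count]; intro x
  simp [Multiset.count_sub]; omega

lemma applyRxn_mono {S T : State σ} (r : Reaction σ) (h : S ≤ T) : applyRxn S r ≤ applyRxn T r :=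
  add_le_add_left (tsub_le_tsub_right h _) _

lemma finalFrom_mono : ∀ (p : Pathway σ) {S T : State σ}, S ≤ T → finalFrom S p ≤ finalFrom T p
  | [], _, _, h => h
  | _ :: p, _, _, h => finalFrom_mono p (applyRxn_mono _ h)

lemma fst_le_minInit_cons (r : Reaction σ) (p : Pathway σ) : r.1 ≤ minInit (r :: p) :=
  self_le_add_right _ _

lemma minInit_le_applyRxn {r : Reaction σ} {p : Pathway σ} {S : State σ}
    (h : minInit (r :: p) ≤ S) : minInit p ≤ applyRxn S r := by
  refine le_trans ?_ (applyRxn_mono r h)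
  show minInit p ≤ r.1 + (minInit p - r.2) - r.1 + r.2
  rw [add_tsub_cancel_left]
  exact le_tsub_add

lemma finalFrom_add : ∀ (p : Pathway σ) {S : State σ} (T : State σ), minInit p ≤ S →
    finalFrom (S + T) p = finalFrom S p + T
  | [], _, _, _ => rfl
  | r :: p, S, T, h => by
    have hr : r.1 ≤ S := le_trans (fst_le_minInit_cons r p) h
    have h2 : applyRxn (S + T) r = applyRxn S r + T := by
      show S + T - r.1 + r.2 = S - r.1 + r.2 + T
      rw [← tsub_add_eq_add_tsub hr, add_right_comm]
    show finalFrom (applyRxn (S + T) r) p = finalFrom (applyRxn S r) p + T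
    rw [h2]
    exact finalFrom_add p T (minInit_le_applyRxn h)

lemma finalFrom_append (S : State σ) : ∀ (p q : Pathway σ),
    finalFrom S (p ++ q) = finalFrom (finalFrom S p) q := by
  intro p; induction p generalizing S with
  | nil => intro q; rfl
  | cons r p ih => intro q; exact ih (applyRxn S r) q

lemma minInit_singleton (r : Reaction σ) : minInit [r] = r.1 := by
  simp [minInit, tsub_eq_zero_of_le]

lemma minInit_take_le : ∀ (p : Pathway σ) (i : ℕ), minInit (p.take i) ≤ minInit p
  | _, 0 => by simp [minInit]
  | [], _+1 => le_rfl
  | r :: p, i+1 => by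
    show r.1 + (minInit (p.take i) - r.2) ≤ r.1 + (minInit p - r.2)
    exact add_le_add_right (tsub_le_tsub_right (minInit_take_le p i) _) _

lemma minInit_append_le : ∀ (p q : Pathway σ), minInit (p ++ q) ≤ minInit p + minInit q
  | [], q => by simp [minInit]
  | r :: p, q => by
    show r.1 + (minInit (p ++ q) - r.2) ≤ r.1 + (minInit p - r.2) + minInit q
    calc r.1 + (minInit (p ++ q) - r.2)
        ≤ r.1 + ((minInit p + minInit q) - r.2) :=
          add_le_add_right (tsub_le_tsub_right (minInit_append_le p q) _) _
      _ ≤ r.1 + ((minInit p - r.2) + minInit q) := add_le_add_right (tsub_add_le_left _ _ _) _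
      _ = r.1 + (minInit p - r.2) + minInit q := (add_assoc _ _ _).symm

lemma minInit_concat_le : ∀ (q : Pathway σ) (r : Reaction σ) {S : State σ}, minInit q ≤ S →
    minInit (q ++ [r]) ≤ S + (r.1 - finalFrom S q)
  | [], r, S, h => by
    show minInit [r] ≤ S + (r.1 - S)
    rw [minInit_singleton]; exact le_add_tsub
  | s :: q, r, S, h => by
    have hs1 : s.1 ≤ S := le_trans (fst_le_minInit_cons s q) h
    have h1 := minInit_concat_le q r (minInit_le_applyRxn h)
    show s.1 + (minInit (q ++ [r]) - s.2) ≤ S + (r.1 - finalFrom S (s :: q))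
    have hfin : finalFrom S (s :: q) = finalFrom (applyRxn S s) q := rfl
    rw [hfin]
    set X := r.1 - finalFrom (applyRxn S s) q with hX
    calc s.1 + (minInit (q ++ [r]) - s.2)
        ≤ s.1 + ((applyRxn S s + X) - s.2) := add_le_add_right (tsub_le_tsub_right h1 _) _
      _ ≤ s.1 + ((applyRxn S s - s.2) + X) := add_le_add_right (tsub_add_le_left _ _ _) _
      _ = s.1 + (applyRxn S s - s.2) + X := (add_assoc _ _ _).symm
      _ ≤ S + X := by
          have h3 : applyRxn S s - s.2 = S - s.1 := by
            show S - s.1 + s.2 - s.2 = S - s.1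
            rw [add_tsub_cancel_right]
          rw [h3, add_tsub_cancel_of_le hs1]

lemma reactant_le_finalFrom : ∀ (q : Pathway σ) (r : Reaction σ) {S : State σ},
    minInit (q ++ [r]) ≤ S → r.1 ≤ finalFrom S q
  | [], r, S, h => by rw [List.nil_append, minInit_singleton] at h; exact h
  | s :: q, r, S, h => reactant_le_finalFrom q r (minInit_le_applyRxn h)

end AuxLemmas

namespace Interleave

variable {α : Type u}

lemma nil_left : ∀ (l : List α), Interleave [] l l
  | [] => .nil
  | _ :: l => .right (nil_left l)

lemma nil_right : ∀ (l : List α), Interleave l [] l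
  | [] => .nil
  | _ :: l => .left (nil_right l)

lemma symm {l₁ l₂ l : List α} (h : Interleave l₁ l₂ l) : Interleave l₂ l₁ l := by
  induction h with
  | nil => exact .nil
  | left _ ih => exact .right ih
  | right _ ih => exact .left ih

lemma length {l₁ l₂ l : List α} (h : Interleave l₁ l₂ l) :
    l.length = l₁.length + l₂.length := by
  induction h with
  | nil => rfl
  | left _ ih => simp [ih]; omega
  | right _ ih => simp [ih]; omega

lemma mem_left {l₁ l₂ l : List α} (h : Interleave l₁ l₂ l) : ∀ a ∈ l₁, a ∈ l := by
  induction h with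
  | nil => simp
  | left _ ih =>
    intro a ha
    rcases List.mem_cons.1 ha with rfl | h'
    · exact List.mem_cons_self
    · exact List.mem_cons_of_mem _ (ih a h')
  | right _ ih => intro a ha; exact List.mem_cons_of_mem _ (ih a ha)

lemma nil_left_eq {l₂ p : List α} (h : Interleave [] l₂ p) : p = l₂ := by
  have aux : ∀ {l₁ l₂ p : List α}, Interleave l₁ l₂ p → l₁ = [] → p = l₂ := by
    intro l₁ l₂ p h
    induction h with
    | nil => intro; rfl
    | left _ _ => intro h'; exact absurd h' (by simp)
    | right _ ih => intro h'; simp [ih h']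
  exact aux h rfl

lemma append_right {l₁ l₂ l : List α} (h : Interleave l₁ l₂ l) (t : List α) :
    Interleave l₁ (l₂ ++ t) (l ++ t) := by
  induction h with
  | nil => simpa using nil_left t
  | left _ ih => exact .left ih
  | right _ ih => exact .right ih

lemma assoc {l₁ l₂ p l₃ l₄ : List α} (h : Interleave l₁ l₂ p) (h2 : Interleave l₃ l₄ l₂) :
    ∃ m, Interleave l₃ m p ∧ Interleave l₁ l₄ m := by
  induction h generalizing l₃ l₄ with
  | nil => cases h2; exact ⟨[], .nil, .nil⟩
  | @left a l₁ l₂ l h ih =>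
    obtain ⟨m, hm1, hm2⟩ := ih h2
    exact ⟨a :: m, .right hm1, .left hm2⟩
  | @right a l₁ l₂ l h ih =>
    cases h2 with
    | left h2' =>
      obtain ⟨m, hm1, hm2⟩ := ih h2'
      exact ⟨m, .left hm1, hm2⟩
    | right h2' =>
      obtain ⟨m, hm1, hm2⟩ := ih h2'
      exact ⟨a :: m, .right hm1, .right hm2⟩

lemma take_split {l₁ l₂ l : List α} (h : Interleave l₁ l₂ l) :
    ∀ i, ∃ i1 i2, i1 ≤ l₁.length ∧ i2 ≤ l₂.length ∧
      Interleave (l₁.take i1) (l₂.take i2) (l.take i) := by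
  induction h with
  | nil => intro i; exact ⟨0, 0, by simp, by simp, by simpa using Interleave.nil⟩
  | @left a l₁ l₂ l h ih =>
    intro i
    cases i with
    | zero => exact ⟨0, 0, by simp, by simp, Interleave.nil⟩
    | succ n =>
      obtain ⟨i1, i2, h1, h2, hI⟩ := ih n
      exact ⟨i1 + 1, i2, by simpa using h1, h2, Interleave.left hI⟩
  | @right a l₁ l₂ l h ih =>
    intro i
    cases i with
    | zero => exact ⟨0, 0, by simp, by simp, Interleave.nil⟩
    | succ n =>
      obtain ⟨i1, i2, h1, h2, hI⟩ := ih n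
      exact ⟨i1, i2 + 1, h1, by simpa using h2, Interleave.right hI⟩

end Interleave

namespace InterleaveMany

variable {α : Type u}

lemma mem_sub {qs : List (List α)} {p : List α} (h : InterleaveMany qs p) :
    ∀ q ∈ qs, ∀ a ∈ q, a ∈ p := by
  induction h with
  | nil => simp
  | @cons q r p qs hI _ ih =>
    intro q' hq' a ha
    rcases List.mem_cons.1 hq' with rfl | hq'
    · exact hI.mem_left a ha
    · exact hI.symm.mem_left a (ih q' hq' a ha)

lemma length_piece_le {qs : List (List α)} {p : List α} (h : InterleaveMany qs p) :
    ∀ q ∈ qs, q.length ≤ p.length := by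
  induction h with
  | nil => simp
  | @cons q r p qs hI _ ih =>
    intro q' hq'
    rcases List.mem_cons.1 hq' with rfl | hq'
    · rw [hI.length]; omega
    · rw [hI.length]; have := ih q' hq'; omega

lemma eq_nil {p : List α} (h : InterleaveMany [] p) : p = [] := by cases h; rfl

lemma append {qs₁ qs₂ : List (List α)} {q₁ q₂ p : List α}
    (h1 : InterleaveMany qs₁ q₁) (h2 : InterleaveMany qs₂ q₂) (hI : Interleave q₁ q₂ p) :
    InterleaveMany (qs₁ ++ qs₂) p := by
  induction h1 generalizing q₂ p with
  | nil =>
    have := hI.nil_left_eq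
    simpa [this] using h2
  | @cons a r q₁ qs hI1 hM1 ih =>
    obtain ⟨m, hm1, hm2⟩ := Interleave.assoc hI.symm hI1
    exact .cons hm1 (ih h2 hm2.symm)

lemma extract {qs : List (List α)} {p : List α} (h : InterleaveMany qs p) :
    ∀ j (hj : j < qs.length), ∃ rest, Interleave (qs.get ⟨j, hj⟩) rest p ∧
      InterleaveMany (qs.eraseIdx j) rest := by
  induction h with
  | nil => intro j hj; simp at hj
  | @cons q r p qs hI hM ih =>
    intro j hj
    cases j with
    | zero => exact ⟨r, hI, by simpa using hM⟩
    | succ n =>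
      obtain ⟨rest', h1, h2⟩ := ih n (by simpa using hj)
      obtain ⟨m, hm1, hm2⟩ := Interleave.assoc hI h1
      exact ⟨m, by simpa using hm1, .cons hm2 h2⟩

end InterleaveMany

section CRNInterleave

lemma finalFrom_interleave {q₁ q₂ p : Pathway σ} (h : Interleave q₁ q₂ p) :
    ∀ {S₁ S₂ : State σ}, minInit q₁ ≤ S₁ → minInit q₂ ≤ S₂ →
      finalFrom (S₁ + S₂) p = finalFrom S₁ q₁ + finalFrom S₂ q₂ := by
  induction h with
  | nil => intro S₁ S₂ _ _; rfl
  | @left r q₁ q₂ p h ih =>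
    intro S₁ S₂ h1 h2
    have hr : r.1 ≤ S₁ := le_trans (fst_le_minInit_cons r q₁) h1
    have h3 : applyRxn (S₁ + S₂) r = applyRxn S₁ r + S₂ := by
      show S₁ + S₂ - r.1 + r.2 = S₁ - r.1 + r.2 + S₂
      rw [← tsub_add_eq_add_tsub hr, add_right_comm]
    show finalFrom (applyRxn (S₁ + S₂) r) p = finalFrom (applyRxn S₁ r) q₁ + finalFrom S₂ q₂
    rw [h3]
    exact ih (minInit_le_applyRxn h1) h2
  | @right r q₁ q₂ p h ih =>
    intro S₁ S₂ h1 h2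
    have hr : r.1 ≤ S₂ := le_trans (fst_le_minInit_cons r q₂) h2
    have h3 : applyRxn (S₁ + S₂) r = S₁ + applyRxn S₂ r := by
      show S₁ + S₂ - r.1 + r.2 = S₁ + (S₂ - r.1 + r.2)
      rw [add_comm S₁ S₂, ← tsub_add_eq_add_tsub hr, add_right_comm, add_comm _ S₁]
    show finalFrom (applyRxn (S₁ + S₂) r) p = finalFrom S₁ q₁ + finalFrom (applyRxn S₂ r) q₂
    rw [h3]
    exact ih h1 (minInit_le_applyRxn h2)

lemma minInit_interleave_le {q₁ q₂ p : Pathway σ} (h : Interleave q₁ q₂ p) :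
    minInit p ≤ minInit q₁ + minInit q₂ := by
  induction h with
  | nil => simp [minInit]
  | @left r q₁ q₂ p h ih =>
    show r.1 + (minInit p - r.2) ≤ (r.1 + (minInit q₁ - r.2)) + minInit q₂
    calc r.1 + (minInit p - r.2)
        ≤ r.1 + ((minInit q₁ + minInit q₂) - r.2) :=
          add_le_add_right (tsub_le_tsub_right ih _) _
      _ ≤ r.1 + ((minInit q₁ - r.2) + minInit q₂) := add_le_add_right (tsub_add_le_left _ _ _) _
      _ = _ := (add_assoc _ _ _).symm
  | @right r q₁ q₂ p h ih =>
    show r.1 + (minInit p - r.2) ≤ minInit q₁ + (r.1 + (minInit q₂ - r.2))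
    calc r.1 + (minInit p - r.2)
        ≤ r.1 + ((minInit q₂ + minInit q₁) - r.2) := by
          refine add_le_add_right (tsub_le_tsub_right ?_ _) _
          rw [add_comm]; exact ih
      _ ≤ r.1 + ((minInit q₂ - r.2) + minInit q₁) := add_le_add_right (tsub_add_le_left _ _ _) _
      _ = minInit q₁ + (r.1 + (minInit q₂ - r.2)) := by
          rw [← add_assoc, add_comm _ (minInit q₁)]

lemma minInit_interleaveMany_le {qs : List (Pathway σ)} {p : Pathway σ}
    (h : InterleaveMany qs p) : minInit p ≤ (qs.map minInit).sum := by
  induction h with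
  | nil => simp [minInit]
  | @cons q r p qs hI hM ih =>
    calc minInit p ≤ minInit q + minInit r := minInit_interleave_le hI
      _ ≤ minInit q + (qs.map minInit).sum := add_le_add_right ih _
      _ = ((q :: qs).map minInit).sum := by simp

lemma finalFrom_interleaveMany_sum {qs : List (Pathway σ)} {p : Pathway σ}
    (h : InterleaveMany qs p) :
    finalFrom ((qs.map minInit).sum) p = (qs.map finalState).sum := by
  induction h with
  | nil => rfl
  | @cons q r p qs hI hM ih =>
    have : ((q :: qs).map minInit).sum = minInit q + (qs.map minInit).sum := by simp
    rw [List.map_cons, List.sum_cons,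
      finalFrom_interleave hI le_rfl (minInit_interleaveMany_le hM), ih]
    rfl

end CRNInterleave

section WidthLemmas

lemma foldr_max_le_iff {l : List ℕ} {n : ℕ} : l.foldr max 0 ≤ n ↔ ∀ x ∈ l, x ≤ n := by
  induction l with
  | nil => simp
  | cons a l ih => simp [Nat.max_le, ih]

lemma le_foldr_max {l : List ℕ} {x : ℕ} (h : x ∈ l) : x ≤ l.foldr max 0 := by
  induction l with
  | nil => simp at h
  | cons a l ih =>
    rcases List.mem_cons.1 h with rfl | h'
    · exact le_max_left _ _
    · exact le_trans (ih h') (le_max_right _ _)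

lemma foldr_max_mem : ∀ (l : List ℕ), l ≠ [] → l.foldr max 0 ∈ l
  | [], h => absurd rfl h
  | [a], _ => by simp
  | a :: b :: l, _ => by
    have hmem := foldr_max_mem (b :: l) (by simp)
    show max a ((b :: l).foldr max 0) ∈ a :: b :: l
    rcases le_total a ((b :: l).foldr max 0) with h | h
    · rw [max_eq_right h]; exact List.mem_cons_of_mem _ hmem
    · rw [max_eq_left h]; exact List.mem_cons_self

lemma sum_le_mul_foldr_max : ∀ (l : List ℕ), l.sum ≤ l.length * l.foldr max 0
  | [] => le_rfl
  | a :: l => by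
    have ih := sum_le_mul_foldr_max l
    show a + l.sum ≤ (l.length + 1) * max a (l.foldr max 0)
    have h1 : a ≤ max a (l.foldr max 0) := le_max_left _ _
    have h2 : l.sum ≤ l.length * max a (l.foldr max 0) :=
      le_trans ih (Nat.mul_le_mul_left _ (le_max_right _ _))
    calc a + l.sum ≤ max a (l.foldr max 0) + l.length * max a (l.foldr max 0) :=
          add_le_add h1 h2
      _ = (l.length + 1) * max a (l.foldr max 0) := by ring

lemma card_stateAt_le_width {p : Pathway σ} {i : ℕ} (h : i ≤ p.length) :
    Multiset.card (stateAt p i) ≤ width p := by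
  apply le_foldr_max
  exact List.mem_map_of_mem (List.mem_range.2 (by omega))

lemma width_le {p : Pathway σ} {n : ℕ} (h : ∀ i ≤ p.length, Multiset.card (stateAt p i) ≤ n) :
    width p ≤ n := by
  apply foldr_max_le_iff.2
  intro x hx
  obtain ⟨i, hi, rfl⟩ := List.mem_map.1 hx
  exact h i (by have := List.mem_range.1 hi; omega)

lemma width_nil : width ([] : Pathway σ) = 0 := by
  simp [width, stateAt, minInit, finalFrom]

lemma width_interleave_le {q₁ q₂ p : Pathway σ} (h : Interleave q₁ q₂ p) :
    width p ≤ width q₁ + width q₂ := by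
  apply width_le
  intro i _
  obtain ⟨i1, i2, h1, h2, hIt⟩ := h.take_split i
  have hmono : stateAt p i ≤ stateAt q₁ i1 + stateAt q₂ i2 := by
    calc stateAt p i = finalFrom (minInit p) (p.take i) := rfl
      _ ≤ finalFrom (minInit q₁ + minInit q₂) (p.take i) :=
          finalFrom_mono _ (minInit_interleave_le h)
      _ = stateAt q₁ i1 + stateAt q₂ i2 :=
          finalFrom_interleave hIt (minInit_take_le q₁ i1) (minInit_take_le q₂ i2)
  calc Multiset.card (stateAt p i) ≤ Multiset.card (stateAt q₁ i1 + stateAt q₂ i2) :=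
        Multiset.card_le_card hmono
    _ = Multiset.card (stateAt q₁ i1) + Multiset.card (stateAt q₂ i2) := Multiset.card_add _ _
    _ ≤ width q₁ + width q₂ := add_le_add (card_stateAt_le_width h1) (card_stateAt_le_width h2)

lemma width_interleaveMany_le {qs : List (Pathway σ)} {p : Pathway σ}
    (h : InterleaveMany qs p) : width p ≤ (qs.map width).sum := by
  induction h with
  | nil => simp [width_nil]
  | @cons q r p qs hI hM ih =>
    calc width p ≤ width q + width r := width_interleave_le hI
      _ ≤ width q + (qs.map width).sum := add_le_add_right ih _
      _ = ((q :: qs).map width).sum := by simp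

end WidthLemmas

section MoreHelpers

lemma map_eraseIdx' {α β : Type u} (f : α → β) :
    ∀ (l : List α) (j : ℕ), (l.eraseIdx j).map f = (l.map f).eraseIdx j
  | [], _ => rfl
  | _ :: _, 0 => rfl
  | a :: l, j+1 => by simp [List.eraseIdx, map_eraseIdx' f l j]

lemma mem_list_sum {x : σ} : ∀ {l : List (Multiset σ)}, x ∈ l.sum → ∃ s ∈ l, x ∈ s := by
  intro l
  induction l with
  | nil => intro h; simp at h
  | cons a l ih =>
    intro h
    rcases Multiset.mem_add.1 (by simpa using h) with h' | h'
    · exact ⟨a, by simp, h'⟩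
    · obtain ⟨s, h1, h2⟩ := ih h'
      exact ⟨s, by simp [h1], h2⟩

lemma filter_list_sum (pr : σ → Prop) [DecidablePred pr] : ∀ (l : List (Multiset σ)),
    (l.sum).filter pr = (l.map (Multiset.filter pr)).sum
  | [] => by simp
  | a :: l => by simp [Multiset.filter_add, filter_list_sum pr l]

lemma list_sum_map_le {α : Type} (l : List α) (f g : α → Multiset σ)
    (h : ∀ a ∈ l, f a ≤ g a) : (l.map f).sum ≤ (l.map g).sum := by
  induction l with
  | nil => exact le_refl _
  | cons a l ih =>
    simp only [List.map_cons, List.sum_cons]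
    exact add_le_add (h a (by simp)) (ih (fun a ha => h a (by simp [ha])))

lemma inter_add_sub (s t : Multiset σ) : s ∩ t + (s - t) = s := by
  ext x
  simp [Multiset.count_sub, Multiset.count_inter]
  omega

lemma exists_eraseIdx_le :
    ∀ (F : List (Multiset σ)) (s : Multiset σ), s ≤ F.sum →
      Multiset.card s < F.length → ∃ j, j < F.length ∧ s ≤ (F.eraseIdx j).sum := by
  intro F
  induction F with
  | nil => intro s _ hc; simp at hc
  | cons G F ih =>
    intro s hle hc
    have hsplit : s ∩ G + (s - G) = s := inter_add_sub s G
    have h2 : s - G ≤ F.sum := tsub_le_iff_left.2 (by simpa using hle)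
    by_cases h0 : s ∩ G = 0
    · refine ⟨0, by simp, ?_⟩
      have hs : s = s - G := by
        conv_lhs => rw [← hsplit]
        rw [h0, zero_add]
      simpa [List.eraseIdx] using hs ▸ h2
    · have hcard : Multiset.card (s - G) < F.length := by
        have h1 : 0 < Multiset.card (s ∩ G) := Multiset.card_pos.2 h0
        have h3 := congrArg Multiset.card hsplit
        rw [Multiset.card_add] at h3
        simp only [List.length_cons] at hc
        omega
      obtain ⟨j, hj, hle'⟩ := ih (s - G) h2 hcard
      refine ⟨j + 1, by simp; omega, ?_⟩
      have : s ≤ G + (F.eraseIdx j).sum := by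
        calc s = s ∩ G + (s - G) := hsplit.symm
          _ ≤ G + (F.eraseIdx j).sum := add_le_add (Multiset.inter_le_right) hle'
      simpa [List.eraseIdx] using this

lemma formalPart_eq_zero_filter {fm : σ → Bool} {S : State σ} (h : FormalState fm S) :
    S.filter (fun x => fm x = false) = 0 := by
  rw [Multiset.filter_eq_nil]
  intro a ha hfa
  simp [h a ha] at hfa

lemma semiformal_nil (fm : σ → Bool) : Semiformal fm ([] : Pathway σ) := by
  intro x hx
  simp [minInit] at hx

lemma not_sdecomposable_nil (fm : σ → Bool) : ¬ SDecomposable fm ([] : Pathway σ) := by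
  rintro ⟨q₁, q₂, h1, h2, hI, -, -⟩
  cases hI
  exact h1 rfl

end MoreHelpers

section Decomposition

lemma exists_decomposition (fm : σ → Bool) :
    ∀ (n : ℕ) (p : Pathway σ), p.length ≤ n → Semiformal fm p →
      ∃ qs : List (Pathway σ), InterleaveMany qs p ∧
        ∀ q ∈ qs, q ≠ [] ∧ Semiformal fm q ∧ ¬ SDecomposable fm q := by
  intro n
  induction n with
  | zero =>
    intro p hl _
    have : p = [] := List.length_eq_zero_iff.1 (Nat.le_zero.1 hl)
    subst this
    exact ⟨[], .nil, by simp⟩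
  | succ n ih =>
    intro p hl hsf
    by_cases hp : p = []
    · subst hp; exact ⟨[], .nil, by simp⟩
    by_cases hd : SDecomposable fm p
    · obtain ⟨q₁, q₂, h1, h2, hI, hs1, hs2⟩ := hd
      have hlen := hI.length
      have hl1 : q₁.length ≤ n := by
        have : 1 ≤ q₂.length := List.length_pos_iff.2 h2
        omega
      have hl2 : q₂.length ≤ n := by
        have : 1 ≤ q₁.length := List.length_pos_iff.2 h1
        omega
      obtain ⟨qs₁, hM1, hq1⟩ := ih q₁ hl1 hs1
      obtain ⟨qs₂, hM2, hq2⟩ := ih q₂ hl2 hs2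
      refine ⟨qs₁ ++ qs₂, hM1.append hM2 hI, ?_⟩
      intro q hq
      rcases List.mem_append.1 hq with h | h
      · exact hq1 q h
      · exact hq2 q h
    · exact ⟨[p], .cons (Interleave.nil_right p) .nil, by simp [hp, hsf, hd]⟩

lemma width_concat_le (q : Pathway σ) (r : Reaction σ) :
    width (q ++ [r]) ≤ width q + max (Multiset.card r.1) (Multiset.card r.2) := by
  set p := q ++ [r] with hp
  have htq : p.take q.length = q := by
    rw [hp]; exact List.take_left
  have hpre : minInit q ≤ minInit p := by
    conv_lhs => rw [← htq]
    exact minInit_take_le p q.length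
  set D := minInit p - minInit q with hDdef
  have hD : minInit q + D = minInit p := add_tsub_cancel_of_le hpre
  have hcardD : Multiset.card D ≤ Multiset.card r.1 := by
    have h1 : minInit p ≤ minInit q + r.1 := by
      have := minInit_append_le q [r]
      rwa [minInit_singleton] at this
    have h2 := Multiset.card_le_card h1
    rw [Multiset.card_add] at h2
    have h3 : Multiset.card D = Multiset.card (minInit p) - Multiset.card (minInit q) :=
      Multiset.card_sub hpre
    have h4 := Multiset.card_le_card hpre
    omega
  have hlen : p.length = q.length + 1 := by simp [hp]
  apply width_le
  intro i hi
  rcases Nat.lt_or_ge i (q.length + 1) with hlt | hge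
  · have hi' : i ≤ q.length := by omega
    have htake : p.take i = q.take i := by
      rw [hp]; exact List.take_append_of_le_length hi'
    have hstate : stateAt p i = stateAt q i + D := by
      rw [stateAt, htake, ← hD, finalFrom_add (q.take i) D (minInit_take_le q i)]
      rfl
    rw [hstate, Multiset.card_add]
    have := card_stateAt_le_width hi'
    have := le_max_left (Multiset.card r.1) (Multiset.card r.2)
    omega
  · have hieq : i = q.length + 1 := by omega
    have hfull : p.take i = p := List.take_of_length_le (by omega)
    have hfq : finalFrom (minInit p) q = finalState q + D := by
      rw [← hD, finalFrom_add q D le_rfl]; rfl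
    have hstate : stateAt p i = applyRxn (finalState q + D) r := by
      rw [stateAt, hfull, hp, finalFrom_append, hfq]
      rfl
    have hr1 : r.1 ≤ finalState q + D := by
      have := reactant_le_finalFrom q r (S := minInit p) le_rfl
      rwa [hfq] at this
    have hcard : Multiset.card (stateAt p i) =
        Multiset.card (finalState q) + Multiset.card D - Multiset.card r.1
          + Multiset.card r.2 := by
      rw [hstate]
      show Multiset.card (finalState q + D - r.1 + r.2) = _
      rw [Multiset.card_add, Multiset.card_sub hr1, Multiset.card_add]
    have hwq : Multiset.card (finalState q) ≤ width q := by
      have hfq2 : finalState q = stateAt q q.length := by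
        rw [stateAt, List.take_length]; rfl
      rw [hfq2]
      exact card_stateAt_le_width le_rfl
    have := le_max_right (Multiset.card r.1) (Multiset.card r.2)
    omega

end Decomposition

section MainAux

lemma pathwayOf_nil (C : Finset (Reaction σ)) : PathwayOf C ([] : Pathway σ) :=
  fun r hr => absurd hr (List.not_mem_nil)

lemma main_aux (fm : σ → Bool) (C : Finset (Reaction σ)) :
    ∀ (n : ℕ) (p : Pathway σ), p.length ≤ n → PathwayOf C p → Semiformal fm p →
      ¬ SDecomposable fm p → ∀ w, 0 < w → w ≤ width p →
      ∃ p', PathwayOf C p' ∧ Semiformal fm p' ∧ ¬ SDecomposable fm p' ∧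
        width p' < w ∧ w ≤ branching C * width p' + branching C := by
  intro n
  induction n with
  | zero =>
    intro p hl _ _ _ w hw hwle
    have hpnil : p = [] := List.length_eq_zero_iff.1 (Nat.le_zero.1 hl)
    subst hpnil
    rw [width_nil] at hwle; omega
  | succ n ih =>
    intro p hl hp hs hu w hw hwle
    rcases List.eq_nil_or_concat p with rfl | ⟨q, r, hpeq⟩
    · rw [width_nil] at hwle; omega
    rw [List.concat_eq_append] at hpeq
    subst hpeq
    set b := branching C with hbdef
    have hrC : r ∈ C := hp r (by simp)
    have hbr : max (Multiset.card r.1) (Multiset.card r.2) ≤ b := by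
      have h0 := Finset.le_sup (s := C)
        (f := fun t : Reaction σ => max (Multiset.card t.1) (Multiset.card t.2)) hrC
      simpa [hbdef, branching] using h0
    have hb1 : Multiset.card r.1 ≤ b := le_trans (le_max_left _ _) hbr
    -- the prefix q is semiformal
    have htq : (q ++ [r]).take q.length = q := List.take_left
    have hpre : minInit q ≤ minInit (q ++ [r]) := by
      conv_lhs => rw [← htq]
      exact minInit_take_le (q ++ [r]) q.length
    have hsq : Semiformal fm q := fun x hx => hs x (Multiset.mem_of_le hpre hx)
    obtain ⟨qs, hqsI, hqs⟩ := exists_decomposition fm q.length q le_rfl hsq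
    have hwp : width (q ++ [r]) ≤ width q + b := le_trans (width_concat_le q r) (by omega)
    have hwsum : width q ≤ (qs.map width).sum := width_interleaveMany_le hqsI
    by_cases hqsnil : qs = []
    · subst hqsnil
      have hqnil : q = [] := hqsI.eq_nil
      subst hqnil
      refine ⟨[], pathwayOf_nil C, semiformal_nil fm, not_sdecomposable_nil fm, ?_, ?_⟩
      · rw [width_nil]; exact hw
      · have h0 : width ([] : Pathway σ) = 0 := width_nil
        omega
    -- number of pieces is at most b
    have hmb : qs.length ≤ b := by
      by_contra hmb
      push_neg at hmb
      set fpred := fun (x : σ) => fm x = false with hfpred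
      set s := r.1.filter fpred with hsdef
      set F := qs.map (fun q' => (finalState q').filter fpred) with hF
      set D := minInit (q ++ [r]) - minInit q with hDdef
      have hD : minInit q + D = minInit (q ++ [r]) := add_tsub_cancel_of_le hpre
      have hfq : finalFrom (minInit (q ++ [r])) q = finalState q + D := by
        rw [← hD, finalFrom_add q D le_rfl]; rfl
      have hr1 : r.1 ≤ finalState q + D := by
        have := reactant_le_finalFrom q r (S := minInit (q ++ [r])) le_rfl
        rwa [hfq] at this
      have hDf : D.filter fpred = 0 :=
        formalPart_eq_zero_filter (fun x hx => hs x (Multiset.mem_of_le tsub_le_self hx))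
      have hfinq : finalState q ≤ (qs.map finalState).sum := by
        have h1 : finalState q ≤ finalFrom ((qs.map minInit).sum) q :=
          finalFrom_mono q (minInit_interleaveMany_le hqsI)
        rwa [finalFrom_interleaveMany_sum hqsI] at h1
      have hsF : s ≤ F.sum := by
        calc s ≤ (finalState q + D).filter fpred := Multiset.filter_le_filter _ hr1
          _ = (finalState q).filter fpred + D.filter fpred := Multiset.filter_add _ _ _
          _ = (finalState q).filter fpred := by rw [hDf, add_zero]
          _ ≤ ((qs.map finalState).sum).filter fpred := Multiset.filter_le_filter _ hfinq
          _ = ((qs.map finalState).map (Multiset.filter fpred)).sum := filter_list_sum fpred _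
          _ = F.sum := by rw [List.map_map]; rfl
      have hcards : Multiset.card s < F.length := by
        have h1 : Multiset.card s ≤ Multiset.card r.1 :=
          Multiset.card_le_card (Multiset.filter_le _ _)
        have h2 : F.length = qs.length := by simp [hF]
        omega
      obtain ⟨j, hj, hsle⟩ := exists_eraseIdx_le F s hsF hcards
      have hj' : j < qs.length := by
        have : F.length = qs.length := by simp [hF]
        omega
      obtain ⟨rest, hIr, hMr⟩ := hqsI.extract j hj'
      have hqj := hqs (qs.get ⟨j, hj'⟩) (List.get_mem qs ⟨j, hj'⟩)
      set S := ((qs.eraseIdx j).map minInit).sum with hSdef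
      set Fs := ((qs.eraseIdx j).map finalState).sum with hFsdef
      have hminrest : minInit rest ≤ S := minInit_interleaveMany_le hMr
      have hfinrest : finalFrom S rest = Fs := finalFrom_interleaveMany_sum hMr
      have hle2 : minInit (rest ++ [r]) ≤ S + (r.1 - Fs) := by
        have h0 := minInit_concat_le rest r hminrest
        rwa [hfinrest] at h0
      have hsemi2 : Semiformal fm (rest ++ [r]) := by
        intro x hx
        have hx2 := Multiset.mem_of_le hle2 hx
        rcases Multiset.mem_add.1 hx2 with hxS | hxr
        · obtain ⟨s', hs', hxs'⟩ := mem_list_sum hxS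
          obtain ⟨q'', hq'', rfl⟩ := List.mem_map.1 hs'
          have hq''qs : q'' ∈ qs := (List.eraseIdx_sublist qs j).mem hq''
          exact (hqs q'' hq''qs).2.1 x hxs'
        · by_contra hfm
          have hfmx : fm x = false := by simpa using hfm
          have hcount : 0 < Multiset.count x (r.1 - Fs) := Multiset.count_pos.2 hxr
          rw [Multiset.count_sub] at hcount
          have hFE : F.eraseIdx j = (qs.eraseIdx j).map (fun q' => (finalState q').filter fpred) :=
            (map_eraseIdx' _ qs j).symm
          have hFs_le : (F.eraseIdx j).sum ≤ Fs := by
            rw [hFE]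
            exact list_sum_map_le _ _ _ (fun a _ => Multiset.filter_le _ _)
          have h5 : s ≤ Fs := le_trans hsle hFs_le
          have h6 := Multiset.count_le_of_le x h5
          have h7 : Multiset.count x s = Multiset.count x r.1 := by
            rw [hsdef, Multiset.count_filter]
            simp [hfpred, hfmx]
          omega
      exact hu ⟨qs.get ⟨j, hj'⟩, rest ++ [r], hqj.1, by simp, hIr.append_right [r],
        hqj.2.1, hsemi2⟩
    -- pick the widest piece
    set w' := (qs.map width).foldr max 0 with hw'
    have hmem : w' ∈ qs.map width := foldr_max_mem _ (by simpa using hqsnil)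
    obtain ⟨q', hq'qs, hq'w⟩ := List.mem_map.1 hmem
    have hq'p := hqs q' hq'qs
    have hpw : PathwayOf C q' := fun a ha =>
      hp a (List.mem_append.2 (Or.inl (hqsI.mem_sub q' hq'qs a ha)))
    have hsumle : (qs.map width).sum ≤ qs.length * w' := by
      have h0 := sum_le_mul_foldr_max (qs.map width)
      simpa [hw'] using h0
    have hchain : width (q ++ [r]) ≤ b * w' + b := by
      have h1 : qs.length * w' ≤ b * w' := Nat.mul_le_mul_right _ hmb
      omega
    rcases Nat.lt_or_ge w' w with hlt | hge
    · refine ⟨q', hpw, hq'p.2.1, hq'p.2.2, hq'w ▸ hlt, ?_⟩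
      calc w ≤ width (q ++ [r]) := hwle
        _ ≤ b * w' + b := hchain
        _ = b * width q' + b := by rw [hq'w]
    · have hlq' : q'.length ≤ n := by
        have h1 := hqsI.length_piece_le q' hq'qs
        have h2 : (q ++ [r]).length = q.length + 1 := by simp
        omega
      exact ih q' hlq' hpw hq'p.2.1 hq'p.2.2 w hw (by rw [hq'w]; exact hge)

end MainAux

/-- From an undecomposable semiformal pathway of width `w > 0` one obtains an
undecomposable semiformal pathway of width `< w` but `≥ (w - b)/b`, where `b` is
the branching factor. -/
theorem exists_smaller_width_undecomposable {σ : Type} [DecidableEq σ] (fm : σ → Bool)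
    (C : Finset (Reaction σ)) (hC : NontrivialRxns C)
    (p : Pathway σ) (hp : PathwayOf C p) (hs : Semiformal fm p)
    (hu : ¬ SDecomposable fm p) (hw : 0 < width p) :
    ∃ p' : Pathway σ, PathwayOf C p' ∧ Semiformal fm p' ∧ ¬ SDecomposable fm p' ∧
      width p' < width p ∧ width p ≤ branching C * width p' + branching C := by
  exact main_aux fm C p.length p le_rfl hp hs hu (width p) hw le_rfl

end CRNVerif
end
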